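/- Let n ≥ 2, let β be an element of the degree-2 part of S_{n−1}, and let c and w be elements of the ℤ-span of x₁,…,x_{n−1}, viewed inside R(β). If (y + w)² = c·(y + w) in R(β), then c = β + 2w, w² = c·w, and c² = β² in S_{n−1}. -/
import Mathlib


open MvPolynomial

/-- The defining ideal `⟨x₁²,…,x_m²⟩` of `S_m = H^*((ℂP¹)^m ; ℤ)`. -/
noncomputable def sqIdeal (m : ℕ) : Ideal (MvPolynomial (Fin m) ℤ) :=
  Ideal.span (Set.range fun i : Fin m => (X i) ^ 2)

/-- The defining ideal `⟨x₁²,…,x_m², y² - βy⟩` of the cohomology ring `R(β)` of the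
one-twist Bott manifold `M(β)` over `(ℂP¹)^m`, where `β = ∑ b_i x_i`; the variable indexed
by `none` is `y`. -/
noncomputable def twistIdeal (m : ℕ) (b : Fin m → ℤ) :
    Ideal (MvPolynomial (Option (Fin m)) ℤ) :=
  Ideal.span
    ((Set.range fun i : Fin m => (X (some i) : MvPolynomial (Option (Fin m)) ℤ) ^ 2) ∪
      {X none ^ 2 - (∑ i : Fin m, C (b i) * X (some i)) * X none})

set_option maxHeartbeats 1000000 in
/-- If `c = ∑ c_i x_i` and `w = ∑ w_i x_i` lie in the ℤ-span of the `x_i` and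
`(y + w)² = c (y + w)` holds in `R(β)`, then `c = β + 2w`, `w² = c w`, and `c² = β²`
(the latter identities holding in `S_{n-1}`). -/
theorem stmt17 (n : ℕ) (hn : 2 ≤ n) (b c w : Fin (n - 1) → ℤ)
    (h : (Ideal.Quotient.mk (twistIdeal (n - 1) b)
        (X none + ∑ i : Fin (n - 1), C (w i) * X (some i))) ^ 2 =
      Ideal.Quotient.mk (twistIdeal (n - 1) b)
        ((∑ i : Fin (n - 1), C (c i) * X (some i)) *
          (X none + ∑ i : Fin (n - 1), C (w i) * X (some i)))) :
    Ideal.Quotient.mk (sqIdeal (n - 1)) (∑ i : Fin (n - 1), C (c i) * X i) =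
        Ideal.Quotient.mk (sqIdeal (n - 1)) (∑ i : Fin (n - 1), C (b i) * X i) +
          2 * Ideal.Quotient.mk (sqIdeal (n - 1)) (∑ i : Fin (n - 1), C (w i) * X i) ∧
      (Ideal.Quotient.mk (sqIdeal (n - 1)) (∑ i : Fin (n - 1), C (w i) * X i)) ^ 2 =
        Ideal.Quotient.mk (sqIdeal (n - 1)) (∑ i : Fin (n - 1), C (c i) * X i) *
          Ideal.Quotient.mk (sqIdeal (n - 1)) (∑ i : Fin (n - 1), C (w i) * X i) ∧
      (Ideal.Quotient.mk (sqIdeal (n - 1)) (∑ i : Fin (n - 1), C (c i) * X i)) ^ 2 =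
        (Ideal.Quotient.mk (sqIdeal (n - 1)) (∑ i : Fin (n - 1), C (b i) * X i)) ^ 2 := by
  set π := Ideal.Quotient.mk (sqIdeal (n - 1)) with hπ
  -- the quotient ring is nontrivial
  have hne_top : sqIdeal (n - 1) ≠ ⊤ := by
    intro htop
    have h1 : (1 : MvPolynomial (Fin (n - 1)) ℤ) ∈ sqIdeal (n - 1) := htop ▸ Submodule.mem_top
    have hle : sqIdeal (n - 1) ≤
        RingHom.ker (constantCoeff : MvPolynomial (Fin (n - 1)) ℤ →+* ℤ) := by
      rw [sqIdeal, Ideal.span_le]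
      rintro r ⟨i, rfl⟩
      simp [RingHom.mem_ker]
    simpa [RingHom.mem_ker] using hle h1
  haveI : Nontrivial (MvPolynomial (Fin (n - 1)) ℤ ⧸ sqIdeal (n - 1)) :=
    Ideal.Quotient.nontrivial_iff.mpr hne_top
  set b' := π (∑ i : Fin (n - 1), C (b i) * X i) with hb'
  set c' := π (∑ i : Fin (n - 1), C (c i) * X i) with hc'
  set w' := π (∑ i : Fin (n - 1), C (w i) * X i) with hw'
  -- the evaluation map into polynomials over the quotient
  set g : Option (Fin (n - 1)) → Polynomial (MvPolynomial (Fin (n - 1)) ℤ ⧸ sqIdeal (n - 1)) :=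
    fun o => o.elim Polynomial.X (fun i => Polynomial.C (π (X i))) with hg
  set Φ : MvPolynomial (Option (Fin (n - 1))) ℤ →ₐ[ℤ]
      Polynomial (MvPolynomial (Fin (n - 1)) ℤ ⧸ sqIdeal (n - 1)) := aeval g with hΦ
  set p : Polynomial (MvPolynomial (Fin (n - 1)) ℤ ⧸ sqIdeal (n - 1)) :=
    Polynomial.X ^ 2 - Polynomial.C b' * Polynomial.X with hp
  have hΦnone : Φ (X none) = Polynomial.X := by rw [hΦ, aeval_X]; rfl
  have hΦsome : ∀ i : Fin (n - 1), Φ (X (some i)) = Polynomial.C (π (X i)) := by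
    intro i; rw [hΦ, aeval_X]; rfl
  have hΦsum : ∀ f : Fin (n - 1) → ℤ,
      Φ (∑ i : Fin (n - 1), C (f i) * X (some i)) =
        Polynomial.C (π (∑ i : Fin (n - 1), C (f i) * X i)) := by
    intro f
    rw [map_sum, map_sum, map_sum]
    refine Finset.sum_congr rfl fun i _ => ?_
    rw [map_mul, hΦsome, map_mul]
    have h1 : Φ (C (f i)) = Polynomial.C (π (C (f i))) := by
      simp [hΦ, aeval_C]
    rw [h1, ← map_mul]
  have key : twistIdeal (n - 1) b ≤ Ideal.comap Φ.toRingHom (Ideal.span {p}) := by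
    rw [twistIdeal, Ideal.span_le]
    rintro r hr
    simp only [Set.mem_union, Set.mem_range, Set.mem_singleton_iff] at hr
    rcases hr with ⟨i, rfl⟩ | rfl
    · have hx : π (X i ^ 2) = 0 :=
        Ideal.Quotient.eq_zero_iff_mem.mpr (Ideal.subset_span ⟨i, rfl⟩)
      have h0 : Φ (X (some i) ^ 2) = 0 := by
        rw [map_pow, hΦsome, ← map_pow, ← map_pow, hx, map_zero]
      refine Ideal.mem_comap.mpr ?_
      show Φ _ ∈ _
      rw [h0]
      exact Ideal.zero_mem _
    · have h0 : Φ (X none ^ 2 - (∑ i : Fin (n - 1), C (b i) * X (some i)) * X none) = p := by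
        rw [map_sub, map_pow, map_mul, hΦnone, hΦsum, hp, hb']
      refine Ideal.mem_comap.mpr ?_
      show Φ _ ∈ _
      rw [h0]
      exact Ideal.subset_span rfl
  rw [← map_pow] at h
  have hmem : (X none + ∑ i : Fin (n - 1), C (w i) * X (some i)) ^ 2 -
      (∑ i : Fin (n - 1), C (c i) * X (some i)) *
        (X none + ∑ i : Fin (n - 1), C (w i) * X (some i)) ∈
      twistIdeal (n - 1) b := Ideal.Quotient.eq.mp h
  have hΦmem : Φ ((X none + ∑ i : Fin (n - 1), C (w i) * X (some i)) ^ 2 -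
      (∑ i : Fin (n - 1), C (c i) * X (some i)) *
        (X none + ∑ i : Fin (n - 1), C (w i) * X (some i))) ∈ Ideal.span {p} :=
    Ideal.mem_comap.mp (key hmem)
  obtain ⟨f, hf⟩ := Ideal.mem_span_singleton'.mp hΦmem
  have hf' : f * p = (Polynomial.X + Polynomial.C w') ^ 2 -
      Polynomial.C c' * (Polynomial.X + Polynomial.C w') := by
    rw [hf]
    rw [map_sub, map_pow, map_mul, map_add, hΦnone, hΦsum, hΦsum, hw', hc']
  rw [hp] at hf'
  have hL : Polynomial.C (b' + 2 * w' - c') * Polynomial.X +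
      Polynomial.C (w' * w' - c' * w') = (f - 1) * p := by
    simp only [map_sub, map_add, map_mul, map_ofNat]
    rw [hp]
    linear_combination -hf'
  have hf1 : f - 1 = 0 := by
    by_contra hne
    have hpm : p.Monic := by
      rw [hp]
      have heq : (Polynomial.X ^ 2 - Polynomial.C b' * Polynomial.X :
          Polynomial (MvPolynomial (Fin (n - 1)) ℤ ⧸ sqIdeal (n - 1))) =
          Polynomial.X * (Polynomial.X - Polynomial.C b') := by ring
      rw [heq]
      exact Polynomial.monic_X.mul (Polynomial.monic_X_sub_C b')
    have hdp : p.natDegree = 2 := by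
      rw [hp]
      compute_degree!
    have hdeg : ((f - 1) * p).natDegree = (f - 1).natDegree + 2 := by
      have hlc : (f - 1).leadingCoeff * p.leadingCoeff ≠ 0 := by
        rw [hpm.leadingCoeff, mul_one]
        exact Polynomial.leadingCoeff_ne_zero.mpr hne
      rw [Polynomial.natDegree_mul' hlc, hdp]
    have hle : (Polynomial.C (b' + 2 * w' - c') * Polynomial.X +
        Polynomial.C (w' * w' - c' * w')).natDegree ≤ 1 := by
      apply le_trans (Polynomial.natDegree_add_le _ _)
      simp only [Polynomial.natDegree_C, max_le_iff]
      constructor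
      · exact le_trans (Polynomial.natDegree_C_mul_le _ _) (by simp)
      · omega
    rw [hL, hdeg] at hle
    omega
  rw [hf1, zero_mul] at hL
  have hcoeff1 := congrArg (fun q => Polynomial.coeff q 1) hL
  have hcoeff0 := congrArg (fun q => Polynomial.coeff q 0) hL
  simp [Polynomial.coeff_C] at hcoeff1 hcoeff0
  have h1 : c' = b' + 2 * w' := by linear_combination -hcoeff1
  have h2 : w' ^ 2 = c' * w' := by linear_combination hcoeff0
  refine ⟨h1, h2, ?_⟩
  linear_combination (c' + b' - 2 * w') * h1 - 4 * h2
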